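/- Define T = flip ∘ Θ ∈ End(V ⊗ V), where flip(u ⊗ w) = (-1)^{p̄(u)p̄(w)} w ⊗ u. Then T - T^{-1} = (q - q^{-1}) · id_{V⊗V}. -/

import Mathlib

set_option synthInstance.maxHeartbeats 400000

/-- The index set `I = {1,…,n,-1,…,-n}`: `Sum.inl a ↔ a+1`, `Sum.inr a ↔ -(a+1)`. -/
abbrev Idx (n : ℕ) := Fin n ⊕ Fin n

/-- Parity: `0` on positive indices, `1` on negative ones. -/
def pa {n : ℕ} : Idx n → ℕ
  | .inl _ => 0
  | .inr _ => 1

/-- The integer represented by an index. -/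
def idxZ {n : ℕ} : Idx n → ℤ
  | .inl a => (a : ℤ) + 1
  | .inr a => -((a : ℤ) + 1)

/-- Negation of an index. -/
def ng {n : ℕ} : Idx n → Idx n
  | .inl a => .inr a
  | .inr a => .inl a

/-- Absolute value of an index. -/
def absIdx {n : ℕ} : Idx n → Fin n
  | .inl a => a
  | .inr a => a

/-- `φ(i,j) = δ_{|i|,|j|} sgn(j)`. -/
def phiIdx {n : ℕ} (i j : Idx n) : ℤ :=
  if absIdx i = absIdx j then (if pa j = 1 then -1 else 1) else 0

/-- The coefficient of `E_{ab} ⊗ E_{cd}` in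
`Θ(x) = Σ_{i,j} x^{φ(i,j)} E_{ii}⊗E_{jj} + (x - x⁻¹) Σ_{i<j} (-1)^{p(i)}(E_{ji}+E_{-j,-i})⊗E_{ij}`. -/
noncomputable def thetaCoeff {n : ℕ} (x : RatFunc ℚ) (a b c d : Idx n) : RatFunc ℚ :=
  (if a = b ∧ c = d then x ^ phiIdx a c else 0)
  + (if idxZ c < idxZ d ∧ a = d ∧ b = c then (x - x⁻¹) * (-1) ^ pa c else 0)
  + (if idxZ c < idxZ d ∧ a = ng d ∧ b = ng c then (x - x⁻¹) * (-1) ^ pa c else 0)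

/-- The matrix of `Θ(x) ∈ End(V) ⊗ End(V)` acting on `V ⊗ V`, where the superalgebra
`End(V) ⊗ End(V)` is represented faithfully on `V ⊗ V` via the Koszul sign rule:
`(E_{ab} ⊗ E_{cd})(v_b ⊗ v_d) = (-1)^{(p(c)+p(d))·p(b)} v_a ⊗ v_c`.  Under this
representation the super tensor-product multiplication
`(a'⊗b)(a⊗b') = (-1)^{p̄(a)p̄(b)} a'a ⊗ bb'` becomes matrix multiplication. -/
noncomputable def thetaMat (n : ℕ) (x : RatFunc ℚ) :
    Matrix (Idx n × Idx n) (Idx n × Idx n) (RatFunc ℚ) :=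
  Matrix.of fun rc cc =>
    (-1 : RatFunc ℚ) ^ ((pa rc.2 + pa cc.2) * pa cc.1) *
      thetaCoeff x rc.1 cc.1 rc.2 cc.2


/-- The matrix of the super flip `flip(v_i ⊗ v_j) = (-1)^{p(i)p(j)} v_j ⊗ v_i`. -/
noncomputable def flipMat (n : ℕ) :
    Matrix (Idx n × Idx n) (Idx n × Idx n) (RatFunc ℚ) :=
  Matrix.of fun rc cc =>
    if rc.1 = cc.2 ∧ rc.2 = cc.1 then (-1 : RatFunc ℚ) ^ (pa cc.1 * pa cc.2) else 0

/-- `T = flip ∘ Θ`. -/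
noncomputable def tMat (n : ℕ) : Matrix (Idx n × Idx n) (Idx n × Idx n) (RatFunc ℚ) :=
  flipMat n * thetaMat n RatFunc.X

/-- `T⁻¹ = Θ(q⁻¹) ∘ flip`. -/
noncomputable def tInvMat (n : ℕ) : Matrix (Idx n × Idx n) (Idx n × Idx n) (RatFunc ℚ) :=
  thetaMat n (RatFunc.X)⁻¹ * flipMat n

open Matrix

variable {n : ℕ}

lemma ng_ng (i : Idx n) : ng (ng i) = i := by cases i <;> rfl

lemma ng_ne (i : Idx n) : ng i ≠ i := by cases i <;> simp [ng]

lemma absIdx_ng (i : Idx n) : absIdx (ng i) = absIdx i := by cases i <;> rfl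

lemma pa_le_one (i : Idx n) : pa i ≤ 1 := by cases i <;> simp [pa]

/-- parity helper -/
lemma negpow (m k : ℕ) (h : m % 2 = k % 2) : ((-1 : RatFunc ℚ)) ^ m = (-1) ^ k := by
  rw [← Nat.div_add_mod m 2, ← Nat.div_add_mod k 2, pow_add, pow_add, pow_mul, pow_mul]
  norm_num [h]

lemma negpow_even (m : ℕ) (h : m % 2 = 0) : ((-1 : RatFunc ℚ)) ^ m = 1 := by
  rw [negpow m 0 (by omega)]; norm_num

/-- diagonal part of Θ -/
noncomputable def Dm (n : ℕ) (x : RatFunc ℚ) :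
    Matrix (Idx n × Idx n) (Idx n × Idx n) (RatFunc ℚ) :=
  Matrix.diagonal fun p => x ^ phiIdx p.1 p.2

/-- nilpotent part entry -/
noncomputable def Nent {n : ℕ} (a c e f : Idx n) : RatFunc ℚ :=
  (-1 : RatFunc ℚ) ^ ((pa c + pa f) * pa e) *
    ((if idxZ c < idxZ f ∧ a = f ∧ e = c then (-1 : RatFunc ℚ) ^ pa c else 0)
     + (if idxZ c < idxZ f ∧ a = ng f ∧ e = ng c then (-1 : RatFunc ℚ) ^ pa c else 0))

/-- nilpotent part of Θ -/
noncomputable def Nm (n : ℕ) :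
    Matrix (Idx n × Idx n) (Idx n × Idx n) (RatFunc ℚ) :=
  Matrix.of fun rc cc => Nent rc.1 rc.2 cc.1 cc.2

lemma theta_decomp (x : RatFunc ℚ) :
    thetaMat n x = Dm n x + (x - x⁻¹) • Nm n := by
  ext ⟨a, c⟩ ⟨e, f⟩
  simp only [thetaMat, thetaCoeff, Matrix.of_apply, Dm, Nm, Nent, Matrix.add_apply,
    Matrix.smul_apply, Matrix.diagonal_apply, smul_eq_mul]
  rw [mul_add, mul_add]
  have h1 : (-1 : RatFunc ℚ) ^ ((pa c + pa f) * pa e) *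
      (if a = e ∧ c = f then x ^ phiIdx a c else 0)
      = if (a, c) = (e, f) then x ^ phiIdx a c else 0 := by
    by_cases h : a = e ∧ c = f
    · obtain ⟨rfl, rfl⟩ := h
      simp [negpow_even ((pa c + pa c) * pa a) (by cases a <;> cases c <;> simp [pa])]
    · rw [if_neg h, if_neg (by simpa [Prod.ext_iff] using h), mul_zero]
  rw [h1]
  ring_nf
  split_ifs <;> ring

lemma DD (x : RatFunc ℚ) (hx : x ≠ 0) : Dm n x * Dm n x⁻¹ = 1 := by
  rw [Dm, Dm, Matrix.diagonal_mul_diagonal]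
  have : (fun p : Idx n × Idx n => x ^ phiIdx p.1 p.2 * x⁻¹ ^ phiIdx p.1 p.2)
      = fun _ => (1 : RatFunc ℚ) := by
    funext p
    rw [_root_.inv_zpow, mul_inv_cancel₀ (zpow_ne_zero _ hx)]
  rw [this, Matrix.diagonal_one]

lemma Nent_cases {a c e f : Idx n} (h : Nent a c e f ≠ 0) :
    (idxZ c < idxZ f ∧ a = f ∧ e = c) ∨ (idxZ c < idxZ f ∧ a = ng f ∧ e = ng c) := by
  by_contra hc
  push_neg at hc
  apply h
  rw [Nent, if_neg, if_neg]
  · ring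
  · intro ⟨h1, h2, h3⟩; exact hc.2 h1 h2 h3
  · intro ⟨h1, h2, h3⟩; exact hc.1 h1 h2 h3

lemma phi_anti {a c : Idx n} (hlt : idxZ c < idxZ a) : phiIdx a c = - phiIdx c a := by
  cases a <;> cases c <;>
    simp only [phiIdx, absIdx, pa, idxZ] at * <;>
    simp only [Fin.ext_iff] <;>
    split_ifs <;> (first | omega | exact (‹False›).elim | norm_num)

lemma phi_anti' {a c : Idx n} (hlt : idxZ c < idxZ (ng a)) :
    phiIdx a c = - phiIdx (ng c) (ng a) := by
  cases a <;> cases c <;>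
    simp only [phiIdx, absIdx, pa, idxZ, ng] at * <;>
    simp only [Fin.ext_iff] <;>
    split_ifs <;> (first | omega | exact (‹False›).elim | norm_num)

lemma Nent_phi {a c e f : Idx n} (h : Nent a c e f ≠ 0) :
    phiIdx a c = - phiIdx e f := by
  rcases Nent_cases h with ⟨hlt, rfl, rfl⟩ | ⟨hlt, rfl, rfl⟩
  · exact phi_anti hlt
  · have := phi_anti' (a := ng _) (c := _) (by rw [ng_ng]; exact hlt)
    rwa [ng_ng] at this

lemma DN (x : RatFunc ℚ) : Dm n x * Nm n = Nm n * Dm n x⁻¹ := by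
  ext rc cc
  simp only [Dm, Matrix.diagonal_mul, Matrix.mul_diagonal]
  by_cases h : Nm n rc cc = 0
  · rw [h]; ring
  · have hphi := Nent_phi (a := rc.1) (c := rc.2) (e := cc.1) (f := cc.2) h
    have : (x⁻¹) ^ phiIdx cc.1 cc.2 = x ^ phiIdx rc.1 rc.2 := by
      rw [hphi, _root_.zpow_neg, _root_.inv_zpow]
    rw [this, mul_comm]

lemma Nent_supp {a c e f : Idx n} (h : Nent a c e f ≠ 0) :
    (e, f) = (c, a) ∨ (e, f) = (ng c, ng a) := by
  rcases Nent_cases h with ⟨_, rfl, rfl⟩ | ⟨_, h2, rfl⟩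
  · left; rfl
  · right
    rw [h2, ng_ng]

lemma NN_key (a c b d : Idx n) :
    Nent a c c a * Nent c a b d + Nent a c (ng c) (ng a) * Nent (ng c) (ng a) b d = 0 := by
  cases a <;> cases c <;> cases b <;> cases d <;>
    simp only [Nent, ng, pa, idxZ, Sum.inl.injEq, Sum.inr.injEq, reduceCtorEq,
      false_and, and_false, true_and, and_true, if_false, if_true, Fin.ext_iff,
      lt_self_iff_false] <;>
    split_ifs <;> (first | omega | exact (‹False›).elim | norm_num) <;> ring

lemma NN : Nm n * Nm n = 0 := by
  ext ⟨a, c⟩ ⟨b, d⟩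
  rw [Matrix.mul_apply, Matrix.zero_apply]
  have hne : ((c, a) : Idx n × Idx n) ≠ (ng c, ng a) := by
    intro h
    exact ng_ne c (congrArg Prod.fst h).symm
  have hv : ∀ k ∈ (Finset.univ : Finset (Idx n × Idx n)),
      k ∉ ({(c, a), (ng c, ng a)} : Finset (Idx n × Idx n)) →
      Nm n (a, c) k * Nm n k (b, d) = 0 := by
    intro k _ hk
    by_cases h : Nm n (a, c) k = 0
    · rw [h, zero_mul]
    · exfalso
      apply hk
      rcases Nent_supp (a := a) (c := c) (e := k.1) (f := k.2) h with h' | h' <;>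
        simp [← h']
  rw [← Finset.sum_subset (Finset.subset_univ _) hv, Finset.sum_pair hne]
  exact NN_key a c b d

lemma flipMat_flipMat : flipMat n * flipMat n = 1 := by
  ext ⟨a, c⟩ ⟨b, d⟩
  rw [Matrix.mul_apply]
  rw [Finset.sum_eq_single ((c, a) : Idx n × Idx n)]
  · show flipMat n (a, c) (c, a) * flipMat n (c, a) (b, d) = _
    simp only [flipMat, Matrix.of_apply, Matrix.one_apply, and_self, if_true]
    by_cases h : (a, c) = ((b, d) : Idx n × Idx n)
    · rw [Prod.mk.injEq] at h
      obtain ⟨rfl, rfl⟩ := h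
      simp only [and_self, if_true, ← pow_add]
      rw [negpow_even _ (by cases a <;> cases c <;> simp [pa])]
    · rw [if_neg h, if_neg, mul_zero]
      intro ⟨h1, h2⟩
      exact h (by rw [h1, h2])
  · intro k _ hk
    have : flipMat n (a, c) k = 0 := by
      simp only [flipMat, Matrix.of_apply]
      rw [if_neg]
      intro ⟨h1, h2⟩
      exact hk (by rw [Prod.ext_iff]; exact ⟨h2.symm, h1.symm⟩)
    rw [this, zero_mul]
  · intro h
    exact absurd (Finset.mem_univ _) h

lemma theta_theta (x : RatFunc ℚ) (hx : x ≠ 0) :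
    thetaMat n x * thetaMat n x⁻¹ = 1 := by
  rw [theta_decomp x, theta_decomp x⁻¹, inv_inv, add_mul, mul_add, mul_add,
    Matrix.smul_mul, Matrix.smul_mul, Matrix.mul_smul, Matrix.mul_smul,
    DD x hx, ← DN x, NN, smul_zero, smul_zero]
  rw [add_zero, add_assoc, ← add_smul]
  have h0 : x⁻¹ - x + (x - x⁻¹) = 0 := by ring
  rw [h0, zero_smul, add_zero]

lemma TTinv : tMat n * tInvMat n = 1 := by
  rw [tMat, tInvMat, mul_assoc, ← mul_assoc (thetaMat n RatFunc.X),
    theta_theta _ RatFunc.X_ne_zero, one_mul, flipMat_flipMat]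

lemma TinvT : tInvMat n * tMat n = 1 := by
  have h := theta_theta (n := n) (RatFunc.X)⁻¹ (inv_ne_zero RatFunc.X_ne_zero)
  rw [inv_inv] at h
  rw [tMat, tInvMat, mul_assoc, ← mul_assoc (flipMat n), flipMat_flipMat, one_mul, h]

lemma tMat_apply (rc cc : Idx n × Idx n) :
    tMat n rc cc = (-1 : RatFunc ℚ) ^ (pa rc.1 * pa rc.2) *
      thetaMat n RatFunc.X (rc.2, rc.1) cc := by
  rw [tMat, Matrix.mul_apply, Finset.sum_eq_single ((rc.2, rc.1) : Idx n × Idx n)]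
  · congr 1
    simp only [flipMat, Matrix.of_apply, and_self, if_true, Nat.mul_comm]
  · intro k _ hk
    have : flipMat n rc k = 0 := by
      simp only [flipMat, Matrix.of_apply]
      rw [if_neg]
      intro ⟨h1, h2⟩
      exact hk (by rw [Prod.ext_iff]; exact ⟨h2.symm, h1.symm⟩)
    rw [this, zero_mul]
  · intro h
    exact absurd (Finset.mem_univ _) h

lemma tInv_apply (rc cc : Idx n × Idx n) :
    tInvMat n rc cc = thetaMat n (RatFunc.X)⁻¹ rc (cc.2, cc.1) *
      (-1 : RatFunc ℚ) ^ (pa cc.1 * pa cc.2) := by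
  rw [tInvMat, Matrix.mul_apply, Finset.sum_eq_single ((cc.2, cc.1) : Idx n × Idx n)]
  · congr 1
    simp only [flipMat, Matrix.of_apply, and_self, if_true]
  · intro k _ hk
    have : flipMat n k cc = 0 := by
      simp only [flipMat, Matrix.of_apply]
      rw [if_neg]
      intro ⟨h1, h2⟩
      exact hk (by rw [Prod.ext_iff]; exact ⟨h1, h2⟩)
    rw [this, mul_zero]
  · intro h
    exact absurd (Finset.mem_univ _) h

set_option maxHeartbeats 3000000 in
lemma diff : tMat n - tInvMat n =
    ((RatFunc.X : RatFunc ℚ) - (RatFunc.X : RatFunc ℚ)⁻¹) •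
      (1 : Matrix (Idx n × Idx n) (Idx n × Idx n) (RatFunc ℚ)) := by
  ext ⟨a, c⟩ ⟨b, d⟩
  rw [Matrix.sub_apply, tMat_apply, tInv_apply, Matrix.smul_apply, Matrix.one_apply,
    smul_eq_mul]
  simp only [thetaMat, thetaCoeff, Matrix.of_apply, inv_inv, Prod.mk.injEq]
  cases a <;> cases c <;> cases b <;> cases d <;>
    simp only [pa, ng, idxZ, phiIdx, absIdx, Sum.inl.injEq, Sum.inr.injEq, reduceCtorEq,
      false_and, and_false, true_and, and_true, if_false, if_true, Fin.ext_iff,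
      lt_self_iff_false, inv_inv] <;>
    (try split_ifs) <;>
    (first
      | omega
      | exact (‹False›).elim
      | (norm_num [zpow_one, _root_.zpow_neg_one, zpow_zero]; try ring))

/-- `T := flip ∘ Θ` is invertible with inverse `Θ(q⁻¹) ∘ flip`, and
`T - T⁻¹ = (q - q⁻¹) · id_{V ⊗ V}`. -/
theorem stmt9 (n : ℕ) :
    tMat n * tInvMat n = 1 ∧ tInvMat n * tMat n = 1 ∧
    tMat n - tInvMat n =
      ((RatFunc.X : RatFunc ℚ) - (RatFunc.X : RatFunc ℚ)⁻¹) • (1 : Matrix (Idx n × Idx n) (Idx n × Idx n) (RatFunc ℚ)) := by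
  exact ⟨TTinv, TinvT, diff⟩
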